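/- For positive integers n and r, writing (1 + z + z² + ... + z^r)^n = h_{n,0}(z^r) + z·h_{n,1}(z^r) + ... + z^{r-1}·h_{n,r-1}(z^r), the polynomial h_{n,0}(z) has only real roots. -/

import Mathlib

open Polynomial

/-- The `j`-th `r`-section `f^{⟨r,j⟩}` of a polynomial `f`: the unique
polynomials with `f(z) = ∑_{j=0}^{r-1} z^j · f^{⟨r,j⟩}(z^r)`. -/
noncomputable def rSection (r j : ℕ) (p : Polynomial ℝ) : Polynomial ℝ :=
  ∑ m ∈ p.support, if m % r = j then C (p.coeff m) * X ^ (m / r) else 0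

namespace Stmt15

open Complex

/-! ### Elementary trigonometric / polar helpers -/

lemma sin_window {x : ℝ} (h1 : -Real.pi < x) (h2 : x < 2*Real.pi) (h3 : 0 ≤ Real.sin x) :
    0 ≤ x := by
  by_contra h
  push_neg at h
  have := Real.sin_neg_of_neg_of_neg_pi_lt h h1
  linarith

lemma sin_nonpos_window {x : ℝ} (h1 : -Real.pi ≤ x) (h2 : x ≤ 0) : Real.sin x ≤ 0 := by
  have := Real.sin_nonneg_of_nonneg_of_le_pi (by linarith : (0:ℝ) ≤ -x) (by linarith)
  rw [Real.sin_neg] at this; linarith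

lemma exp_mul_exp (β γ : ℝ) :
    Complex.exp ((β:ℝ) * I) * Complex.exp ((γ:ℝ) * I) = Complex.exp (((β + γ : ℝ)) * I) := by
  rw [← Complex.exp_add]; push_cast; ring_nf

lemma polar_mul (ρ σ β γ : ℝ) :
    ((ρ:ℂ) * Complex.exp ((β:ℝ) * I)) * ((σ:ℂ) * Complex.exp ((γ:ℝ) * I))
      = ((ρ * σ : ℝ):ℂ) * Complex.exp ((β + γ : ℝ) * I) := by
  rw [mul_mul_mul_comm, exp_mul_exp]; push_cast; ring_nf

lemma polar_conj (σ γ : ℝ) :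
    (starRingEnd ℂ) ((σ:ℂ) * Complex.exp ((γ:ℝ) * I))
      = (σ:ℂ) * Complex.exp ((-γ:ℝ) * I) := by
  rw [map_mul, ← Complex.exp_conj, map_mul, conj_ofReal, conj_I, conj_ofReal]
  push_cast; ring_nf

lemma im_polar (c δ : ℝ) : ((c:ℂ) * Complex.exp ((δ:ℝ) * I)).im = c * Real.sin δ := by
  simp [Complex.exp_mul_I, Complex.mul_im, Complex.sin_ofReal_re, Complex.cos_ofReal_re]

lemma im_flip (w A B : ℂ) :
    (w * B * (starRingEnd ℂ) A).im = -((starRingEnd ℂ) w * A * (starRingEnd ℂ) B).im := by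
  simp only [Complex.mul_im, Complex.mul_re, Complex.conj_re, Complex.conj_im]; ring

/-! ### Sectors -/

def InSector (m M : ℝ) (z : ℂ) : Prop :=
  ∃ ρ φ : ℝ, 0 < ρ ∧ m ≤ φ ∧ φ ≤ M ∧ z = (ρ:ℂ) * Complex.exp ((φ:ℝ) * I)

lemma sector_add_core {m M : ℝ} (hW : M - m < Real.pi) {ρ₁ ρ₂ φ₁ φ₂ : ℝ}
    (h1 : 0 < ρ₁) (h2 : 0 < ρ₂) (hm1 : m ≤ φ₁) (hM2 : φ₂ ≤ M) (hφ : φ₁ ≤ φ₂) :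
    InSector m M ((ρ₁:ℂ) * Complex.exp ((φ₁:ℝ) * I) + (ρ₂:ℂ) * Complex.exp ((φ₂:ℝ) * I)) := by
  set δ : ℝ := φ₂ - φ₁ with hδ
  have hδ0 : 0 ≤ δ := by simp [hδ]; linarith
  have hδπ : δ < Real.pi := by simp [hδ]; linarith
  set P : ℂ := (ρ₁:ℂ) + (ρ₂:ℂ) * Complex.exp ((δ:ℝ) * I) with hP
  have hPim : P.im = ρ₂ * Real.sin δ := by
    simp [hP, Complex.add_im, im_polar]
  have hPim0 : 0 ≤ P.im := by
    rw [hPim]; exact mul_nonneg h2.le (Real.sin_nonneg_of_nonneg_of_le_pi hδ0 hδπ.le)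
  have hP0 : P ≠ 0 := by
    rcases eq_or_lt_of_le hδ0 with h | h
    · have : P = ((ρ₁ + ρ₂ : ℝ):ℂ) := by
        rw [hP, ← h]; push_cast; simp
      rw [this]
      exact_mod_cast ne_of_gt (by positivity : (0:ℝ) < ρ₁ + ρ₂)
    · intro h0
      have h1' : P.im = 0 := by rw [h0]; simp
      rw [hPim] at h1'
      have := Real.sin_pos_of_pos_of_lt_pi h hδπ
      nlinarith
  set ψ : ℝ := Complex.arg P with hψ
  have hψ0 : 0 ≤ ψ := Complex.arg_nonneg_iff.2 hPim0
  have hψπ : ψ ≤ Real.pi := Complex.arg_le_pi P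
  have hPolarP : P = (‖P‖ : ℂ) * Complex.exp ((ψ:ℝ) * I) :=
    (Complex.norm_mul_exp_arg_mul_I P).symm
  have habs : 0 < ‖P‖ := norm_pos_iff.mpr hP0
  have hψδ : ψ ≤ δ := by
    have hcomp : (P * Complex.exp ((-δ:ℝ) * I)).im = ‖P‖ * Real.sin (ψ - δ) := by
      conv_lhs => rw [hPolarP]
      rw [mul_assoc, exp_mul_exp, im_polar, show ψ + -δ = ψ - δ by ring]
    have hcomp2 : (P * Complex.exp ((-δ:ℝ) * I)).im = -(ρ₁ * Real.sin δ) := by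
      rw [hP, add_mul, mul_assoc, exp_mul_exp, Complex.add_im, im_polar, im_polar,
        show δ + -δ = 0 by ring, Real.sin_zero, Real.sin_neg]
      ring
    have hsin : Real.sin (ψ - δ) ≤ 0 := by
      have h := hcomp.symm.trans hcomp2
      have hs : 0 ≤ Real.sin δ := Real.sin_nonneg_of_nonneg_of_le_pi hδ0 hδπ.le
      nlinarith
    by_contra hc
    push_neg at hc
    rcases lt_or_eq_of_le (by linarith : ψ - δ ≤ Real.pi) with h | h
    · have := Real.sin_pos_of_pos_of_lt_pi (by linarith : 0 < ψ - δ) h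
      linarith
    · have hψpi : ψ = Real.pi := by linarith
      have hδ0' : δ = 0 := by linarith
      have hPr : P = ((ρ₁ + ρ₂ : ℝ):ℂ) := by
        rw [hP, hδ0']; push_cast; simp
      have : ψ = 0 := by
        rw [hψ, hPr, Complex.arg_ofReal_of_nonneg (by positivity)]
      rw [this] at hψpi
      exact Real.pi_ne_zero hψpi.symm
  refine ⟨‖P‖, φ₁ + ψ, habs, by linarith, by linarith, ?_⟩
  have key : (ρ₁:ℂ) * Complex.exp ((φ₁:ℝ) * I) + (ρ₂:ℂ) * Complex.exp ((φ₂:ℝ) * I)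
      = Complex.exp ((φ₁:ℝ) * I) * P := by
    rw [hP, mul_add]
    have h2' : Complex.exp ((φ₁:ℝ) * I) * ((ρ₂:ℂ) * Complex.exp ((δ:ℝ) * I))
        = (ρ₂:ℂ) * Complex.exp ((φ₂:ℝ) * I) := by
      rw [mul_comm (Complex.exp ((φ₁:ℝ) * I)) _, mul_assoc, exp_mul_exp,
        show δ + φ₁ = φ₂ by rw [hδ]; ring]
    rw [h2']
    ring
  rw [key]
  conv_lhs => rw [hPolarP]
  rw [← mul_assoc, mul_comm (Complex.exp ((φ₁:ℝ) * I)) ((‖P‖ : ℂ)), mul_assoc,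
    exp_mul_exp, show φ₁ + ψ = ψ + φ₁ by ring]

lemma sector_add {m M : ℝ} (hW : M - m < Real.pi) {z₁ z₂ : ℂ}
    (h1 : InSector m M z₁) (h2 : InSector m M z₂) : InSector m M (z₁ + z₂) := by
  obtain ⟨ρ₁, φ₁, hρ₁, hm₁, hM₁, rfl⟩ := h1
  obtain ⟨ρ₂, φ₂, hρ₂, hm₂, hM₂, rfl⟩ := h2
  rcases le_total φ₁ φ₂ with h | h
  · exact sector_add_core hW hρ₁ hρ₂ hm₁ hM₂ h
  · rw [add_comm]
    exact sector_add_core hW hρ₂ hρ₁ hm₂ hM₁ h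

lemma sector_sum {m M : ℝ} (hW : M - m < Real.pi) {ι : Type*} {s : Finset ι}
    (hs : s.Nonempty) (f : ι → ℂ) (h : ∀ i ∈ s, InSector m M (f i)) :
    InSector m M (∑ i ∈ s, f i) := by
  induction hs using Finset.Nonempty.cons_induction with
  | singleton i => simpa using h i (by simp)
  | cons i s his hs ih =>
    rw [Finset.sum_cons]
    exact sector_add hW (h i (by simp)) (ih (fun j hj => h j (by simp [hj])))

/-! ### The two key inequalities -/

lemma key1 (w A B C D : ℂ) (hw : 0 ≤ w.im)
    (hwBA : 0 ≤ (w * B * (starRingEnd ℂ) A).im)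
    (hAC : 0 ≤ (A * (starRingEnd ℂ) C).im)
    (hBC : 0 ≤ (B * (starRingEnd ℂ) C).im)
    (hBD : 0 ≤ (B * (starRingEnd ℂ) D).im)
    (hBC' : ((starRingEnd ℂ) w * B * (starRingEnd ℂ) C).im ≤ 0)
    (hCD' : ((starRingEnd ℂ) w * C * (starRingEnd ℂ) D).im ≤ 0) :
    0 ≤ ((A + (1+w)*B + w*C + w*D) * (starRingEnd ℂ) (A + B + (1+w)*C + w*D)).im := by
  have hexp : ((A + (1+w)*B + w*C + w*D) * (starRingEnd ℂ) (A + B + (1+w)*C + w*D)).im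
      = (w * B * (starRingEnd ℂ) A).im + (A * (starRingEnd ℂ) C).im
        + Complex.normSq B * w.im + Complex.normSq C * w.im
        + Complex.normSq (1+w) * (B * (starRingEnd ℂ) C).im
        + Complex.normSq w * (B * (starRingEnd ℂ) D).im
        - ((starRingEnd ℂ) w * B * (starRingEnd ℂ) C).im
        - ((starRingEnd ℂ) w * C * (starRingEnd ℂ) D).im := by
    simp only [map_add, map_mul, map_one, Complex.normSq_apply,
      Complex.add_im, Complex.add_re, Complex.mul_im, Complex.mul_re,
      Complex.one_re, Complex.one_im, Complex.conj_re, Complex.conj_im]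
    ring
  rw [hexp]
  have h1 : 0 ≤ Complex.normSq B * w.im := mul_nonneg (Complex.normSq_nonneg B) hw
  have h2 : 0 ≤ Complex.normSq C * w.im := mul_nonneg (Complex.normSq_nonneg C) hw
  have h3 : 0 ≤ Complex.normSq (1+w) * (B * (starRingEnd ℂ) C).im :=
    mul_nonneg (Complex.normSq_nonneg _) hBC
  have h4 : 0 ≤ Complex.normSq w * (B * (starRingEnd ℂ) D).im :=
    mul_nonneg (Complex.normSq_nonneg _) hBD
  linarith

lemma key2 (w B E F : ℂ) (hw : 0 ≤ w.im)
    (hBF : 0 ≤ (B * (starRingEnd ℂ) F).im)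
    (hBE' : ((starRingEnd ℂ) w * B * (starRingEnd ℂ) E).im ≤ 0)
    (hBF' : ((starRingEnd ℂ) w * B * (starRingEnd ℂ) F).im ≤ 0)
    (hEF' : ((starRingEnd ℂ) w * E * (starRingEnd ℂ) F).im ≤ 0) :
    0 ≤ (w * (B + E + (1+w)*F) * (starRingEnd ℂ) ((1+w)*B + w*E + w*F)).im := by
  have hexp : (w * (B + E + (1+w)*F) * (starRingEnd ℂ) ((1+w)*B + w*E + w*F)).im
      = Complex.normSq B * w.im + Complex.normSq w * Complex.normSq F * w.im
        + Complex.normSq w * (B * (starRingEnd ℂ) F).im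
        - ((starRingEnd ℂ) w * B * (starRingEnd ℂ) E).im
        - Complex.normSq (1+w) * ((starRingEnd ℂ) w * B * (starRingEnd ℂ) F).im
        - Complex.normSq w * ((starRingEnd ℂ) w * E * (starRingEnd ℂ) F).im := by
    simp only [map_add, map_mul, map_one, Complex.normSq_apply,
      Complex.add_im, Complex.add_re, Complex.mul_im, Complex.mul_re,
      Complex.one_re, Complex.one_im, Complex.conj_re, Complex.conj_im]
    ring
  rw [hexp]
  have h1 : 0 ≤ Complex.normSq B * w.im := mul_nonneg (Complex.normSq_nonneg B) hw
  have h2 : 0 ≤ Complex.normSq w * Complex.normSq F * w.im :=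
    mul_nonneg (mul_nonneg (Complex.normSq_nonneg _) (Complex.normSq_nonneg _)) hw
  have h3 : 0 ≤ Complex.normSq w * (B * (starRingEnd ℂ) F).im :=
    mul_nonneg (Complex.normSq_nonneg _) hBF
  have h4 : Complex.normSq (1+w) * ((starRingEnd ℂ) w * B * (starRingEnd ℂ) F).im ≤ 0 :=
    mul_nonpos_of_nonneg_of_nonpos (Complex.normSq_nonneg _) hBF'
  have h5 : Complex.normSq w * ((starRingEnd ℂ) w * E * (starRingEnd ℂ) F).im ≤ 0 :=
    mul_nonpos_of_nonneg_of_nonpos (Complex.normSq_nonneg _) hEF'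
  linarith

/-! ### The invariant -/

def Inv (r : ℕ) (w : ℂ) (b : ℕ → ℂ) : Prop :=
  ∃ α : ℕ → ℝ, (∀ i k, i ≤ k → k < r → α k ≤ α i) ∧ (α 0 - α (r-1) ≤ w.arg) ∧
    ∀ j, j < r → ∃ ρ : ℝ, 0 < ρ ∧ b j = (ρ:ℂ) * Complex.exp ((α j :ℝ) * I)


/-! ### The inductive step -/

lemma inv_step (r : ℕ) (hr : 0 < r) (w : ℂ) (hw : 0 < w.im) (b b' : ℕ → ℂ)
    (hrec : ∀ j, j < r →
      b' j = (∑ i ∈ Finset.range (j+1), b i) + w * ∑ i ∈ Finset.Ico j r, b i)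
    (hinv : Inv r w b) : Inv r w b' := by
  obtain ⟨α, hmono, hwin, hpolar⟩ := hinv
  set θ : ℝ := w.arg with hθ
  have hθ0 : 0 ≤ θ := Complex.arg_nonneg_iff.mpr hw.le
  have hθπ : θ < Real.pi := by
    rcases lt_or_eq_of_le (Complex.arg_le_pi w) with h' | h'
    · exact h'
    · exact absurd ((Complex.arg_eq_pi_iff).mp h').2 (ne_of_gt hw)
  have hw0 : w ≠ 0 := fun h => by simp [h] at hw
  have habsw : 0 < ‖w‖ := norm_pos_iff.mpr hw0
  have hwpolar : w = ((‖w‖ : ℝ):ℂ) * Complex.exp ((θ:ℝ) * I) :=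
    (Complex.norm_mul_exp_arg_mul_I w).symm
  have hwconj : (starRingEnd ℂ) w = ((‖w‖ : ℝ):ℂ) * Complex.exp ((-θ:ℝ) * I) := by
    conv_lhs => rw [hwpolar]
    exact polar_conj _ _
  -- bounds on α within the window
  have hα_le : ∀ i, i < r → α i ≤ α 0 := fun i hi => hmono 0 i (Nat.zero_le i) hi
  have hα_ge : ∀ i, i < r → α (r-1) ≤ α i := fun i hi => hmono i (r-1) (by omega) (by omega)
  -- pair facts
  have pairP : ∀ i k, i ≤ k → k < r → 0 ≤ (b i * (starRingEnd ℂ) (b k)).im := by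
    intro i k hik hk
    obtain ⟨ρi, hρi, hbi⟩ := hpolar i (by omega)
    obtain ⟨ρk, hρk, hbk⟩ := hpolar k hk
    rw [hbi, hbk, polar_conj, polar_mul, im_polar]
    have h1 : 0 ≤ α i - α k := by have := hmono i k hik hk; linarith
    have h2 : α i - α k ≤ Real.pi := by
      have := hα_le i (by omega); have := hα_ge k hk; linarith
    have := Real.sin_nonneg_of_nonneg_of_le_pi (by linarith : (0:ℝ) ≤ α i + -α k)
      (by linarith : α i + -α k ≤ Real.pi)
    positivity
  have pairN : ∀ i k, i ≤ k → k < r →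
      ((starRingEnd ℂ) w * b i * (starRingEnd ℂ) (b k)).im ≤ 0 := by
    intro i k hik hk
    obtain ⟨ρi, hρi, hbi⟩ := hpolar i (by omega)
    obtain ⟨ρk, hρk, hbk⟩ := hpolar k hk
    rw [hbi, hbk, hwconj, polar_conj, polar_mul, polar_mul, im_polar]
    have h1 : -Real.pi ≤ -θ + α i + -α k := by
      have := hmono i k hik hk; linarith
    have h2 : -θ + α i + -α k ≤ 0 := by
      have := hα_le i (by omega); have := hα_ge k hk; linarith
    have hs := sin_nonpos_window h1 h2
    have : 0 ≤ ‖w‖ * ρi * ρk := by positivity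
    exact mul_nonpos_of_nonneg_of_nonpos this hs
  -- block facts
  have blkP : ∀ (s t : Finset ℕ), (∀ i ∈ s, ∀ k ∈ t, i ≤ k ∧ k < r) →
      0 ≤ ((∑ i ∈ s, b i) * (starRingEnd ℂ) (∑ k ∈ t, b k)).im := by
    intro s t h
    rw [map_sum, Finset.sum_mul_sum, Complex.im_sum]
    apply Finset.sum_nonneg
    intro i hi
    rw [Complex.im_sum]
    apply Finset.sum_nonneg
    intro k hk
    exact pairP i k (h i hi k hk).1 (h i hi k hk).2
  have blkN : ∀ (s t : Finset ℕ), (∀ i ∈ s, ∀ k ∈ t, i ≤ k ∧ k < r) →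
      ((starRingEnd ℂ) w * (∑ i ∈ s, b i) * (starRingEnd ℂ) (∑ k ∈ t, b k)).im ≤ 0 := by
    intro s t h
    have hrw : (starRingEnd ℂ) w * (∑ i ∈ s, b i) * (starRingEnd ℂ) (∑ k ∈ t, b k)
        = ∑ i ∈ s, ∑ k ∈ t, (starRingEnd ℂ) w * b i * (starRingEnd ℂ) (b k) := by
      rw [map_sum]
      rw [show (starRingEnd ℂ) w * (∑ i ∈ s, b i) = ∑ i ∈ s, (starRingEnd ℂ) w * b i from
        Finset.mul_sum _ _ _]
      rw [Finset.sum_mul_sum]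
    rw [hrw, Complex.im_sum]
    apply Finset.sum_nonpos
    intro i hi
    rw [Complex.im_sum]
    apply Finset.sum_nonpos
    intro k hk
    exact pairN i k (h i hi k hk).1 (h i hi k hk).2
  -- sectors for the new values
  have hsector : ∀ j, j < r → InSector (α j) (α j + θ) (b' j) := by
    intro j hj
    rw [hrec j hj]
    apply sector_add (by linarith : (α j + θ) - α j < Real.pi)
    · apply sector_sum (by linarith : (α j + θ) - α j < Real.pi) Finset.nonempty_range_add_one
      intro i hi
      rw [Finset.mem_range] at hi
      obtain ⟨ρ, hρ, hb⟩ := hpolar i (by omega)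
      refine ⟨ρ, α i, hρ, hmono i j (by omega) hj, ?_, hb⟩
      have := hα_le i (by omega); have := hα_ge j hj; linarith
    · rw [Finset.mul_sum]
      apply sector_sum (by linarith : (α j + θ) - α j < Real.pi) (Finset.nonempty_Ico.2 hj)
      intro i hi
      rw [Finset.mem_Ico] at hi
      obtain ⟨ρ, hρ, hb⟩ := hpolar i hi.2
      refine ⟨‖w‖ * ρ, θ + α i, by positivity, ?_, ?_, ?_⟩
      · have := hα_le j hj; have := hα_ge i hi.2; linarith
      · have := hmono j i hi.1 hi.2; linarith
      · rw [hb]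
        conv_lhs => rw [hwpolar]
        rw [polar_mul]
  -- choose arguments for the new values
  have hchoice : ∀ j, ∃ ρ φ : ℝ, j < r →
      (0 < ρ ∧ α j ≤ φ ∧ φ ≤ α j + θ ∧ b' j = (ρ:ℂ) * Complex.exp ((φ:ℝ) * I)) := by
    intro j
    by_cases hj : j < r
    · obtain ⟨ρ, φ, h1, h2, h3, h4⟩ := hsector j hj
      exact ⟨ρ, φ, fun _ => ⟨h1, h2, h3, h4⟩⟩
    · exact ⟨1, 0, fun h => absurd h hj⟩
  choose ρ' α' hprop using hchoice
  -- adjacent comparisons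
  have adj : ∀ j, j + 1 < r → α' (j+1) ≤ α' j := by
    intro j hj1
    have hj : j < r := by omega
    set A : ℂ := ∑ i ∈ Finset.range j, b i with hA
    set D : ℂ := ∑ i ∈ Finset.Ico (j+2) r, b i with hD
    have hbj : b' j = A + (1+w)*(b j) + w*(b (j+1)) + w*D := by
      rw [hrec j hj, Finset.sum_range_succ,
        Finset.sum_eq_sum_Ico_succ_bot hj, Finset.sum_eq_sum_Ico_succ_bot hj1]
      rw [← hA, ← hD]
      ring
    have hbj1 : b' (j+1) = A + (b j) + (1+w)*(b (j+1)) + w*D := by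
      rw [hrec (j+1) hj1, Finset.sum_range_succ, Finset.sum_range_succ,
        Finset.sum_eq_sum_Ico_succ_bot hj1]
      rw [← hA, ← hD]
      ring
    -- key1 hypotheses
    have sing : ∀ k : ℕ, b k = ∑ i ∈ ({k} : Finset ℕ), b i := by
      intro k; rw [Finset.sum_singleton]
    have hwBA : 0 ≤ (w * (b j) * (starRingEnd ℂ) A).im := by
      rw [im_flip]
      have := blkN (Finset.range j) {j} (by
        intro i hi k hk
        rw [Finset.mem_range] at hi
        rw [Finset.mem_singleton] at hk
        omega)
      rw [Finset.sum_singleton] at this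
      rw [← hA] at this
      linarith
    have hAC : 0 ≤ (A * (starRingEnd ℂ) (b (j+1))).im := by
      have := blkP (Finset.range j) {j+1} (by
        intro i hi k hk
        rw [Finset.mem_range] at hi
        rw [Finset.mem_singleton] at hk
        omega)
      rw [Finset.sum_singleton] at this
      rw [← hA] at this
      exact this
    have hBC : 0 ≤ ((b j) * (starRingEnd ℂ) (b (j+1))).im := pairP j (j+1) (by omega) hj1
    have hBD : 0 ≤ ((b j) * (starRingEnd ℂ) D).im := by
      have := blkP {j} (Finset.Ico (j+2) r) (by
        intro i hi k hk
        rw [Finset.mem_singleton] at hi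
        rw [Finset.mem_Ico] at hk
        omega)
      rw [Finset.sum_singleton] at this
      rw [← hD] at this
      exact this
    have hBC' : ((starRingEnd ℂ) w * (b j) * (starRingEnd ℂ) (b (j+1))).im ≤ 0 :=
      pairN j (j+1) (by omega) hj1
    have hCD' : ((starRingEnd ℂ) w * (b (j+1)) * (starRingEnd ℂ) D).im ≤ 0 := by
      have := blkN {j+1} (Finset.Ico (j+2) r) (by
        intro i hi k hk
        rw [Finset.mem_singleton] at hi
        rw [Finset.mem_Ico] at hk
        omega)
      rw [Finset.sum_singleton] at this
      rw [← hD] at this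
      exact this
    have hkey := key1 w A (b j) (b (j+1)) D hw.le hwBA hAC hBC hBD hBC' hCD'
    rw [← hbj, ← hbj1] at hkey
    -- convert to the sine inequality
    obtain ⟨hρj, hαj1, hαj2, hbj'⟩ := hprop j hj
    obtain ⟨hρj1, hαj11, hαj12, hbj1'⟩ := hprop (j+1) hj1
    rw [hbj', hbj1', polar_conj, polar_mul, im_polar] at hkey
    have hsin : 0 ≤ Real.sin (α' j + -α' (j+1)) := by
      by_contra hc
      push_neg at hc
      have := mul_neg_of_pos_of_neg (mul_pos hρj hρj1) hc
      linarith
    have hd1 : -Real.pi < α' j + -α' (j+1) := by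
      have h1 := hmono j (j+1) (by omega) hj1
      linarith
    have hd2 : α' j + -α' (j+1) < 2*Real.pi := by
      have h2 : α j - α (j+1) ≤ α 0 - α (r-1) := by
        have := hα_le j hj; have := hα_ge (j+1) hj1; linarith
      linarith [hwin]
    have := sin_window hd1 hd2 hsin
    linarith
  -- full monotonicity
  have mono' : ∀ i k, i ≤ k → k < r → α' k ≤ α' i := by
    have hstep : ∀ d i, i + d < r → α' (i + d) ≤ α' i := by
      intro d
      induction d with
      | zero => intro i _; simp
      | succ d ih =>
        intro i h
        have h1 : α' (i + d + 1) ≤ α' (i + d) := adj (i + d) (by omega)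
        have h2 := ih i (by omega)
        calc α' (i + (d+1)) = α' (i + d + 1) := by ring_nf
          _ ≤ α' (i + d) := h1
          _ ≤ α' i := h2
    intro i k hik hk
    have := hstep (k - i) i (by omega)
    rwa [show i + (k - i) = k by omega] at this
  -- wrap-around
  have wrap : α' 0 - α' (r-1) ≤ θ := by
    rcases eq_or_lt_of_le (Nat.succ_le_of_lt hr) with h1 | h1
    · rw [show r - 1 = 0 by omega]
      linarith
    · -- r ≥ 2
      have hr2 : 2 ≤ r := h1
      set E : ℂ := ∑ i ∈ Finset.Ico 1 (r-1), b i with hE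
      have hsplit : ∑ i ∈ Finset.range r, b i = b 0 + E + b (r-1) := by
        rw [Finset.range_eq_Ico, Finset.sum_eq_sum_Ico_succ_bot (by omega : 0 < r)]
        have : ∑ i ∈ Finset.Ico 1 r, b i = (∑ i ∈ Finset.Ico 1 (r-1), b i) + b (r-1) := by
          have h2 : r = (r-1) + 1 := by omega
          rw [h2, Finset.sum_Ico_succ_top (by omega : 1 ≤ r - 1)]
          rw [← h2]
        rw [this, ← hE]
        ring
      have hlast : b' (r-1) = (b 0) + E + (1+w)*(b (r-1)) := by
        rw [hrec (r-1) (by omega)]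
        rw [show r - 1 + 1 = r by omega]
        rw [hsplit]
        have : ∑ i ∈ Finset.Ico (r-1) r, b i = b (r-1) := by
          rw [Finset.sum_eq_sum_Ico_succ_bot (by omega : r - 1 < r)]
          rw [show r - 1 + 1 = r by omega, Finset.Ico_self, Finset.sum_empty, add_zero]
        rw [this]
        ring
      have hfirst : b' 0 = (1+w)*(b 0) + w*E + w*(b (r-1)) := by
        rw [hrec 0 (by omega)]
        rw [Finset.range_one, Finset.sum_singleton]
        have : Finset.Ico 0 r = Finset.range r := by rw [Finset.range_eq_Ico]
        rw [this, hsplit]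
        ring
      -- key2 hypotheses
      have hBF : 0 ≤ ((b 0) * (starRingEnd ℂ) (b (r-1))).im := pairP 0 (r-1) (by omega) (by omega)
      have hBE' : ((starRingEnd ℂ) w * (b 0) * (starRingEnd ℂ) E).im ≤ 0 := by
        have := blkN {0} (Finset.Ico 1 (r-1)) (by
          intro i hi k hk
          rw [Finset.mem_singleton] at hi
          rw [Finset.mem_Ico] at hk
          omega)
        rw [Finset.sum_singleton] at this
        rw [← hE] at this
        exact this
      have hBF' : ((starRingEnd ℂ) w * (b 0) * (starRingEnd ℂ) (b (r-1))).im ≤ 0 :=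
        pairN 0 (r-1) (by omega) (by omega)
      have hEF' : ((starRingEnd ℂ) w * E * (starRingEnd ℂ) (b (r-1))).im ≤ 0 := by
        have := blkN (Finset.Ico 1 (r-1)) {r-1} (by
          intro i hi k hk
          rw [Finset.mem_Ico] at hi
          rw [Finset.mem_singleton] at hk
          omega)
        rw [Finset.sum_singleton] at this
        rw [← hE] at this
        exact this
      have hkey := key2 w (b 0) E (b (r-1)) hw.le hBF hBE' hBF' hEF'
      rw [← hlast, ← hfirst] at hkey
      obtain ⟨hρl, hαl1, hαl2, hbl'⟩ := hprop (r-1) (by omega)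
      obtain ⟨hρ0, hα01, hα02, hb0'⟩ := hprop 0 (by omega)
      rw [hbl', hb0', polar_conj] at hkey
      conv at hkey => rw [hwpolar]
      rw [polar_mul, polar_mul, im_polar] at hkey
      have hsin : 0 ≤ Real.sin (θ + α' (r-1) + -α' 0) := by
        by_contra hc
        push_neg at hc
        have := mul_neg_of_pos_of_neg (mul_pos (mul_pos habsw hρl) hρ0) hc
        linarith
      have hd1 : -Real.pi < θ + α' (r-1) + -α' 0 := by
        have := hα_ge 0 (by omega)
        linarith [hwin]
      have hd2 : θ + α' (r-1) + -α' 0 < 2*Real.pi := by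
        have h2 : α (r-1) - α 0 ≤ 0 := by
          have := hα_le (r-1) (by omega); linarith
        linarith
      have := sin_window hd1 hd2 hsin
      linarith
  exact ⟨α', mono', wrap, fun j hj => ⟨ρ' j, (hprop j hj).1, (hprop j hj).2.2.2⟩⟩

/-! ### Coefficients of sections -/

lemma rSection_coeff {r j : ℕ} (hr : 0 < r) (hj : j < r) (p : Polynomial ℝ) (q : ℕ) :
    (rSection r j p).coeff q = p.coeff (q * r + j) := by
  unfold rSection
  rw [Polynomial.finset_sum_coeff]
  rw [Finset.sum_eq_single (q * r + j)]
  · have hmod : (q * r + j) % r = j := by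
      rw [Nat.add_mod, Nat.mul_mod_left, Nat.zero_add, Nat.mod_mod_of_dvd _ (dvd_refl r),
        Nat.mod_eq_of_lt hj]
    have hdiv : (q * r + j) / r = q := by
      rw [add_comm, Nat.add_mul_div_right _ _ hr, Nat.div_eq_of_lt hj, Nat.zero_add]
    rw [if_pos hmod, Polynomial.coeff_C_mul, Polynomial.coeff_X_pow, hdiv, if_pos rfl, mul_one]
  · intro m hm hne
    by_cases h : m % r = j
    · rw [if_pos h, Polynomial.coeff_C_mul, Polynomial.coeff_X_pow]
      have hq : ¬ (q = m / r) := by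
        intro he
        apply hne
        conv_lhs => rw [← Nat.div_add_mod m r, h, ← he]
        ring_nf
      rw [if_neg hq, mul_zero]
    · rw [if_neg h, Polynomial.coeff_zero]
  · intro h
    rw [Polynomial.notMem_support_iff] at h
    rw [h]
    simp

lemma rSection_mul (r j : ℕ) (hr : 0 < r) (hj : j < r) (p : Polynomial ℝ) :
    rSection r j ((∑ e ∈ Finset.range (r+1), X^e) * p)
      = (∑ i ∈ Finset.range (j+1), rSection r i p)
        + X * ∑ i ∈ Finset.Ico j r, rSection r i p := by
  ext q
  rw [rSection_coeff hr hj]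
  rw [Finset.sum_mul, Polynomial.finset_sum_coeff]
  have hterm : ∀ e, (X^e * p).coeff (q * r + j)
      = if e ≤ q * r + j then p.coeff (q * r + j - e) else 0 := by
    intro e
    rw [Polynomial.X_pow_mul, Polynomial.coeff_mul_X_pow']
  simp only [hterm]
  have hsplit : ∑ e ∈ Finset.range (r+1), (if e ≤ q * r + j then p.coeff (q * r + j - e) else 0)
      = (∑ e ∈ Finset.range (j+1), (if e ≤ q * r + j then p.coeff (q * r + j - e) else 0))
        + ∑ e ∈ Finset.Ico (j+1) (r+1), (if e ≤ q * r + j then p.coeff (q * r + j - e) else 0) := by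
    rw [Finset.sum_range_add_sum_Ico _ (by omega : j + 1 ≤ r + 1)]
  rw [hsplit]
  have hRHS1 : (∑ i ∈ Finset.range (j+1), rSection r i p).coeff q
      = ∑ i ∈ Finset.range (j+1), p.coeff (q * r + i) := by
    rw [Polynomial.finset_sum_coeff]
    apply Finset.sum_congr rfl
    intro i hi
    rw [Finset.mem_range] at hi
    exact rSection_coeff hr (by omega) p q
  have hpart1 : ∑ e ∈ Finset.range (j+1), (if e ≤ q * r + j then p.coeff (q * r + j - e) else 0)
      = ∑ i ∈ Finset.range (j+1), p.coeff (q * r + i) := by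
    have h1 : ∀ e ∈ Finset.range (j+1),
        (if e ≤ q * r + j then p.coeff (q * r + j - e) else 0) = p.coeff (q * r + (j - e)) := by
      intro e he
      rw [Finset.mem_range] at he
      rw [if_pos (by omega), Nat.add_sub_assoc (by omega)]
    rw [Finset.sum_congr rfl h1]
    exact Finset.sum_range_reflect (fun i => p.coeff (q * r + i)) (j+1)
  rw [hpart1, Polynomial.coeff_add, hRHS1]
  congr 1
  rcases q with _ | q'
  · have h0 : ∀ e ∈ Finset.Ico (j+1) (r+1),
        (if e ≤ 0 * r + j then p.coeff (0 * r + j - e) else 0) = 0 := by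
      intro e he
      rw [Finset.mem_Ico] at he
      rw [if_neg (by omega)]
    rw [Finset.sum_congr rfl h0, Finset.sum_const, smul_zero]
    rw [Polynomial.mul_coeff_zero, Polynomial.coeff_X_zero, zero_mul]
  · rw [Polynomial.coeff_X_mul, Polynomial.finset_sum_coeff]
    have hRHS2 : ∑ i ∈ Finset.Ico j r, (rSection r i p).coeff q'
        = ∑ i ∈ Finset.Ico j r, p.coeff (q' * r + i) := by
      apply Finset.sum_congr rfl
      intro i hi
      rw [Finset.mem_Ico] at hi
      exact rSection_coeff hr hi.2 p q'
    rw [hRHS2]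
    apply Finset.sum_nbij' (fun e => r + j - e) (fun i => r + j - i)
    · intro e he
      rw [Finset.mem_Ico] at he ⊢
      omega
    · intro i hi
      rw [Finset.mem_Ico] at hi ⊢
      omega
    · intro e he
      rw [Finset.mem_Ico] at he
      omega
    · intro i hi
      rw [Finset.mem_Ico] at hi
      omega
    · intro e he
      rw [Finset.mem_Ico] at he
      have h1 : e ≤ (q' + 1) * r + j := by
        have h2 : (q' + 1) * r = q' * r + r := by ring
        omega
      rw [if_pos h1]
      congr 1
      have h2 : (q' + 1) * r = q' * r + r := by ring
      omega

lemma rSection_one {r i : ℕ} (hr : 0 < r) (hi : i < r) :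
    rSection r i (1 : Polynomial ℝ) = if i = 0 then 1 else 0 := by
  ext q
  rw [rSection_coeff hr hi, Polynomial.coeff_one]
  by_cases hi0 : i = 0
  · subst hi0
    rw [if_pos rfl, Polynomial.coeff_one]
    rcases q with _ | q'
    · simp
    · rw [if_neg (by positivity), if_neg (by omega)]
  · rw [if_neg hi0, Polynomial.coeff_zero, if_neg (by omega)]

/-! ### `arg (1+w) ≤ arg w` -/

lemma arg_one_add_le (w : ℂ) (hw : 0 < w.im) : (1 + w).arg ≤ w.arg := by
  set θ : ℝ := w.arg with hθ
  have hθ0 : 0 < θ := by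
    rcases lt_or_eq_of_le (Complex.arg_nonneg_iff.mpr hw.le) with h | h
    · exact h
    · exfalso
      have := (Complex.arg_eq_zero_iff).mp h.symm
      exact absurd this.2 (ne_of_gt hw)
  have hw0 : w ≠ 0 := fun h => by simp [h] at hw
  have habsw : 0 < ‖w‖ := norm_pos_iff.mpr hw0
  have h1w : (1 + w) ≠ 0 := by
    intro h
    have : (1 + w).im = 0 := by rw [h]; simp
    simp only [Complex.add_im, Complex.one_im, zero_add] at this
    exact absurd this (ne_of_gt hw)
  have habs1w : 0 < ‖1+w‖ := norm_pos_iff.mpr h1w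
  set φ : ℝ := (1 + w).arg with hφ
  have hφπ : φ ≤ Real.pi := Complex.arg_le_pi _
  have hwconj : (starRingEnd ℂ) w = ((‖w‖ : ℝ):ℂ) * Complex.exp ((-θ:ℝ) * I) := by
    conv_lhs => rw [(Complex.norm_mul_exp_arg_mul_I w).symm]
    exact polar_conj _ _
  have h1wpolar : (1 + w) = ((‖1+w‖ : ℝ):ℂ) * Complex.exp ((φ:ℝ) * I) :=
    (Complex.norm_mul_exp_arg_mul_I (1+w)).symm
  have hcomp : ((starRingEnd ℂ) w * (1 + w)).im
      = (‖w‖ * ‖1+w‖) * Real.sin (-θ + φ) := by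
    rw [hwconj]
    conv_lhs => rw [h1wpolar]
    rw [polar_mul, im_polar]
  have hcomp2 : ((starRingEnd ℂ) w * (1 + w)).im = -(w.im) := by
    simp only [Complex.mul_im, Complex.add_re, Complex.add_im, Complex.one_re, Complex.one_im,
      Complex.conj_re, Complex.conj_im]
    ring
  by_contra hc
  push_neg at hc
  have hs : 0 < Real.sin (-θ + φ) := by
    apply Real.sin_pos_of_pos_of_lt_pi
    · linarith
    · linarith
  have := mul_pos (mul_pos habsw habs1w) hs
  rw [← hcomp] at this
  rw [hcomp2] at this
  linarith

/-! ### The main induction -/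

lemma inv_all (r : ℕ) (hr : 0 < r) (w : ℂ) (hw : 0 < w.im) :
    ∀ n, 1 ≤ n → Inv r w
      (fun j => Polynomial.aeval w (rSection r j ((∑ e ∈ Finset.range (r+1), X^e)^n))) := by
  have hθ0 : 0 ≤ w.arg := Complex.arg_nonneg_iff.mpr hw.le
  intro n hn
  induction n, hn using Nat.le_induction with
  | base =>
    have hval : ∀ j, j < r →
        Polynomial.aeval w (rSection r j ((∑ e ∈ Finset.range (r+1), X^e)^1))
          = if j = 0 then 1 + w else 1 := by
      intro j hj
      rw [pow_one, ← mul_one (∑ e ∈ Finset.range (r+1), X^e), rSection_mul r j hr hj]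
      rw [map_add, map_sum, map_mul, Polynomial.aeval_X, map_sum]
      have hterm : ∀ i ∈ Finset.range (j+1),
          Polynomial.aeval w (rSection r i (1 : Polynomial ℝ))
            = if i = 0 then (1:ℂ) else 0 := by
        intro i hi
        rw [Finset.mem_range] at hi
        rw [rSection_one hr (by omega)]
        split_ifs <;> simp
      have hterm2 : ∀ i ∈ Finset.Ico j r,
          Polynomial.aeval w (rSection r i (1 : Polynomial ℝ))
            = if i = 0 then (1:ℂ) else 0 := by
        intro i hi
        rw [Finset.mem_Ico] at hi
        rw [rSection_one hr (by omega)]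
        split_ifs <;> simp
      rw [Finset.sum_congr rfl hterm, Finset.sum_congr rfl hterm2]
      rw [Finset.sum_ite_eq' (Finset.range (j+1)) 0 (fun _ => (1:ℂ))]
      rw [Finset.sum_ite_eq' (Finset.Ico j r) 0 (fun _ => (1:ℂ))]
      rw [if_pos (by simp)]
      by_cases hj0 : j = 0
      · subst hj0
        rw [if_pos (by rw [Finset.mem_Ico]; omega), if_pos rfl]
        ring
      · rw [if_neg (by rw [Finset.mem_Ico]; omega), if_neg hj0]
        ring
    refine ⟨fun j => if j = 0 then (1 + w).arg else 0, ?_, ?_, ?_⟩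
    · intro i k hik hk
      beta_reduce
      by_cases hi0 : i = 0
      · subst hi0
        by_cases hk0 : k = 0
        · rw [hk0]
        · rw [if_neg hk0, if_pos rfl]
          exact Complex.arg_nonneg_iff.mpr (by simp [hw.le])
      · rw [if_neg hi0, if_neg (by omega)]
    · beta_reduce
      by_cases hr1 : r = 1
      · subst hr1
        simp [hθ0]
      · rw [if_pos rfl, if_neg (by omega)]
        have := arg_one_add_le w hw
        linarith
    · intro j hj
      beta_reduce
      rw [hval j hj]
      by_cases hj0 : j = 0
      · subst hj0
        rw [if_pos rfl, if_pos rfl]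
        have h1w : (1 + w) ≠ 0 := by
          intro h
          have h2 : (1 + w).im = 0 := by rw [h]; simp
          simp only [Complex.add_im, Complex.one_im, zero_add] at h2
          exact absurd h2 (ne_of_gt hw)
        exact ⟨‖1+w‖, norm_pos_iff.mpr h1w,
          (Complex.norm_mul_exp_arg_mul_I (1+w)).symm⟩
      · rw [if_neg hj0, if_neg hj0]
        refine ⟨1, one_pos, ?_⟩
        simp
  | succ n hn ih =>
    apply inv_step r hr w hw _ _ _ ih
    intro j hj
    show Polynomial.aeval w (rSection r j ((∑ e ∈ Finset.range (r+1), X^e)^(n+1))) = _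
    rw [pow_succ'  (∑ e ∈ Finset.range (r+1), X^e) n, rSection_mul r j hr hj]
    rw [map_add, map_sum, map_mul, Polynomial.aeval_X, map_sum]

lemma nonvanish (r : ℕ) (hr : 0 < r) (w : ℂ) (hw : 0 < w.im) (n : ℕ) (hn : 1 ≤ n) :
    Polynomial.aeval w (rSection r 0 ((∑ e ∈ Finset.range (r+1), X^e)^n)) ≠ 0 := by
  obtain ⟨α, hmono, hwin, hpolar⟩ := inv_all r hr w hw n hn
  obtain ⟨ρ, hρ, heq⟩ := hpolar 0 hr
  beta_reduce at heq
  rw [heq]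
  exact mul_ne_zero (by exact_mod_cast ne_of_gt hρ) (Complex.exp_ne_zero _)

end Stmt15

theorem stmt15 (n r : ℕ) (hn : 0 < n) (hr : 0 < r) :
    ∀ z : ℂ, aeval z (rSection r 0 ((∑ j ∈ Finset.range (r + 1), X ^ j) ^ n)) = 0 →
      z.im = 0 := by
  intro z hz
  by_contra him
  rcases lt_or_gt_of_ne him with hneg | hpos
  · -- im z < 0 : pass to the conjugate
    have hconj : aeval ((starRingEnd ℂ) z) (rSection r 0 ((∑ j ∈ Finset.range (r + 1), X ^ j) ^ n))
        = 0 := by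
      have := Polynomial.aeval_algHom_apply (Complex.conjAe.toAlgHom) z
        (rSection r 0 ((∑ j ∈ Finset.range (r + 1), X ^ j) ^ n))
      have h2 : (Complex.conjAe.toAlgHom : ℂ →ₐ[ℝ] ℂ) z = (starRingEnd ℂ) z := rfl
      rw [h2] at this
      rw [this]
      simp [hz]
    exact Stmt15.nonvanish r hr ((starRingEnd ℂ) z) (by simpa using hneg) n hn hconj
  · exact Stmt15.nonvanish r hr z hpos n hn hz
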